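/- Let ρ > 0 and T > 0. Then ∫_{ℝ^2} f_2(x_1, x_2)^2 dx_1 dx_2 = T/ρ + (e^{−2ρT} − 1)/(2ρ^2), where the integral is with respect to two-dimensional Lebesgue measure. -/

import Mathlib

open Real MeasureTheory Set Filter intervalIntegral
open scoped Topology

/-- The second chaos kernel of the quadratic functional of the Ornstein–Uhlenbeck Lévy
process. -/
noncomputable def ouKernel (ρ T x₁ x₂ : ℝ) : ℝ :=
  (if x₁ ≤ T then (1 : ℝ) else 0) * (if x₂ ≤ T then (1 : ℝ) else 0) *
    Real.exp (ρ * (x₁ + x₂)) *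
    ((1 - Real.exp (-2 * ρ * T)) * (if max x₁ x₂ ≤ 0 then (1 : ℝ) else 0) +
      (Real.exp (-2 * ρ * max x₁ x₂) - Real.exp (-2 * ρ * T)) *
        (if 0 < max x₁ x₂ then (1 : ℝ) else 0))



lemma exp_mul_hasDerivAt {b : ℝ} (hb : b ≠ 0) (x : ℝ) :
    HasDerivAt (fun y => Real.exp (b * y) / b) (Real.exp (b * x)) x := by
  have h : HasDerivAt (fun y => Real.exp (b * y)) (Real.exp (b * x) * b) x := by
    simpa using ((hasDerivAt_id x).const_mul b).exp
  simpa [mul_div_assoc, mul_div_cancel_right₀ _ hb] using h.div_const b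

lemma integral_exp_mul' {b : ℝ} (hb : b ≠ 0) (u v : ℝ) :
    ∫ x in u..v, Real.exp (b * x) = (Real.exp (b * v) - Real.exp (b * u)) / b := by
  rw [show (Real.exp (b * v) - Real.exp (b * u)) / b
      = Real.exp (b * v) / b - Real.exp (b * u) / b by ring]
  exact integral_eq_sub_of_hasDerivAt (fun x _ => exp_mul_hasDerivAt hb x)
    ((Real.continuous_exp.comp (continuous_const.mul continuous_id)).intervalIntegrable u v)

lemma integrableOn_exp_mul_Iic' {b : ℝ} (hb : 0 < b) (c : ℝ) :
    IntegrableOn (fun x => Real.exp (b * x)) (Iic c) := by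
  refine integrableOn_Iic_of_intervalIntegral_norm_bounded (Real.exp (b * c) / b) c
    (fun y => ((Real.continuous_exp.comp
      (continuous_const.mul continuous_id)).integrableOn_Ioc)) tendsto_id
    (Eventually.of_forall fun y => ?_)
  simp_rw [Real.norm_of_nonneg (Real.exp_pos _).le, id_eq, integral_exp_mul' hb.ne']
  have := (Real.exp_pos (b * y)).le
  gcongr
  linarith

lemma integral_exp_mul_Iic' {b : ℝ} (hb : 0 < b) (c : ℝ) :
    ∫ x in Iic c, Real.exp (b * x) = Real.exp (b * c) / b := by
  have ht : Tendsto (fun y => Real.exp (b * y) / b) atBot (𝓝 0) := by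
    have h1 : Tendsto (fun y : ℝ => b * y) atBot atBot :=
      Tendsto.const_mul_atBot hb tendsto_id
    simpa using (Real.tendsto_exp_atBot.comp h1).div_const b
  have := integral_Iic_of_hasDerivAt_of_tendsto
    (f := fun y => Real.exp (b * y) / b) (f' := fun x => Real.exp (b * x)) (a := c)
    (((Real.continuous_exp.comp (continuous_const.mul continuous_id)).div_const b).continuousWithinAt)
    (fun x _ => exp_mul_hasDerivAt hb.ne' x) (integrableOn_exp_mul_Iic' hb c) ht
  simpa using this

/- ### max lemmas -/

lemma max_max_left {x y : ℝ} (h : y ≤ max x 0) : max (max x y) 0 = max x 0 := by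
  rcases le_total y x with h1 | h1
  · rw [max_eq_left h1]
  · rw [max_eq_right h1]
    rcases le_total x 0 with h2 | h2
    · have hy0 : y ≤ 0 := h.trans (by simp [max_eq_right h2])
      rw [max_eq_right hy0, max_eq_right h2]
    · have : y ≤ x := h.trans (by simp [max_eq_left h2])
      have : y = x := le_antisymm this h1
      rw [this]

lemma max_max_right {x y : ℝ} (h : max x 0 ≤ y) : max (max x y) 0 = y := by
  have hx : x ≤ y := (le_max_left x 0).trans h
  have h0 : (0 : ℝ) ≤ y := (le_max_right x 0).trans h
  rw [max_eq_right hx, max_eq_left h0]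

/- ### the squared kernel -/




/-- explicit form of the squared kernel -/
noncomputable def auxF (a T x y : ℝ) : ℝ :=
  (if x ≤ T then (1 : ℝ) else 0) * (if y ≤ T then (1 : ℝ) else 0) *
    (Real.exp (a * (x + y)) *
      (Real.exp (-(a * max (max x y) 0)) - Real.exp (-(a * T))) ^ 2)

/-- value of the inner integral -/
noncomputable def auxJ (a T x : ℝ) : ℝ :=
  (if x ≤ T then (1 : ℝ) else 0) *
    (Real.exp (a * x) *
      (2 * (Real.exp (-(a * max x 0)) - Real.exp (-(a * T))) / a -
        2 * Real.exp (-(a * T)) * (T - max x 0)))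

lemma ouKernel_sq (ρ T x y : ℝ) :
    ouKernel ρ T x y ^ 2 = auxF (2 * ρ) T x y := by
  unfold ouKernel auxF
  rcases le_or_gt (max x y) 0 with h | h
  · rw [if_pos h, if_neg (not_lt.2 h), max_eq_right h]
    by_cases h1 : x ≤ T <;> by_cases h2 : y ≤ T <;>
      simp only [h1, h2, if_true, if_false, mul_zero, zero_mul, mul_one, one_mul,
        ne_eq, OfNat.ofNat_ne_zero, not_false_eq_true, zero_pow] <;>
    · rw [mul_pow, sq (Real.exp _), ← Real.exp_add]
      try simp only [mul_zero, neg_zero, Real.exp_zero]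
      ring_nf
  · rw [if_pos h, if_neg (not_le.2 h), max_eq_left h.le]
    by_cases h1 : x ≤ T <;> by_cases h2 : y ≤ T <;>
      simp only [h1, h2, if_true, if_false, mul_zero, zero_mul, mul_one, one_mul,
        ne_eq, OfNat.ofNat_ne_zero, not_false_eq_true, zero_pow] <;>
    · rw [mul_pow, sq (Real.exp _), ← Real.exp_add]
      try simp only [mul_zero, neg_zero, Real.exp_zero]
      ring_nf

/- ### inner integral -/

lemma inner_integral {a T : ℝ} (ha : 0 < a) (hT : 0 < T) (x : ℝ) :
    ∫ y : ℝ, auxF a T x y = auxJ a T x := by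
  by_cases hx : x ≤ T
  case neg =>
    simp [auxF, auxJ, hx]
  set E := Real.exp (-(a * T)) with hE
  set c := max x 0 with hc
  have hcT : c ≤ T := max_le hx hT.le
  have h0c : (0 : ℝ) ≤ c := le_max_right x 0
  set h : ℝ → ℝ := fun y =>
    Real.exp (a * (x + y)) * (Real.exp (-(a * max (max x y) 0)) - E) ^ 2 with hh
  have hcont : Continuous h := by fun_prop
  -- rewrite as indicator
  have h1 : ∀ y, auxF a T x y = (Iic T).indicator h y := by
    intro y
    by_cases hy : y ≤ T <;> simp [auxF, hx, hy, indicator_apply, mem_Iic, hh, hE]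
  rw [show (∫ y : ℝ, auxF a T x y) = ∫ y : ℝ, (Iic T).indicator h y from by
    simp_rw [h1], MeasureTheory.integral_indicator measurableSet_Iic]
  -- integrability on Iic T
  have hIntT : IntegrableOn h (Iic T) := by
    refine Integrable.mono' (g := fun y => Real.exp (a * x) * Real.exp (a * y))
      ((integrableOn_exp_mul_Iic' ha T).const_mul _)
      hcont.aestronglyMeasurable.restrict
      (Eventually.of_forall fun y => ?_)
    have hd1 : Real.exp (-(a * max (max x y) 0)) ≤ 1 := by
      apply Real.exp_le_one_iff.2
      have : (0:ℝ) ≤ max (max x y) 0 := le_max_right _ _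
      nlinarith
    have hE1 : E ≤ 1 := by
      apply Real.exp_le_one_iff.2
      nlinarith
    have hsq : (Real.exp (-(a * max (max x y) 0)) - E) ^ 2 ≤ 1 := by
      have := (Real.exp_pos (-(a * max (max x y) 0))).le
      have := (Real.exp_pos (-(a * T))).le
      rw [← hE] at *
      nlinarith
    have hnn : 0 ≤ h y := by positivity
    rw [Real.norm_of_nonneg hnn, hh]
    simp only []
    calc Real.exp (a * (x + y)) * (Real.exp (-(a * max (max x y) 0)) - E) ^ 2
        ≤ Real.exp (a * (x + y)) * 1 := by
          have := (Real.exp_pos (a * (x + y))).le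
          nlinarith
      _ = Real.exp (a * x) * Real.exp (a * y) := by
          rw [mul_one, mul_add, Real.exp_add]
  have hIntc : IntegrableOn h (Iic c) := hIntT.mono_set (Iic_subset_Iic.2 hcT)
  have hsplit := intervalIntegral.integral_Iic_sub_Iic hIntc hIntT
  have hIicT : (∫ y in Iic T, h y) = (∫ y in Iic c, h y) + ∫ y in c..T, h y := by
    linarith
  rw [hIicT]
  -- the Iic c part
  have hIicc : (∫ y in Iic c, h y)
      = ((Real.exp (-(a * c)) - E) ^ 2 * Real.exp (a * x)) * (Real.exp (a * c) / a) := by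
    rw [show (∫ y in Iic c, h y)
        = ∫ y in Iic c, ((Real.exp (-(a * c)) - E) ^ 2 * Real.exp (a * x)) * Real.exp (a * y)
        from setIntegral_congr_fun measurableSet_Iic (fun y hy => by
          rw [hh]
          simp only []
          rw [max_max_left (le_trans hy le_rfl), mul_add, Real.exp_add]
          ring)]
    rw [MeasureTheory.integral_const_mul, integral_exp_mul_Iic' ha]
  -- the interval part
  set Φ : ℝ → ℝ := fun y =>
    Real.exp (a * x) * (Real.exp (-a * y) / (-a) - 2 * E * y + E ^ 2 * Real.exp (a * y) / a)
    with hΦ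
  have hInterval : (∫ y in c..T, h y) = Φ T - Φ c := by
    rw [intervalIntegral.integral_congr (g := fun y =>
        Real.exp (a * x) * (Real.exp (-a * y) - 2 * E + E ^ 2 * Real.exp (a * y)))
      (by
        rw [uIcc_of_le hcT]
        intro y hy
        rw [hh]
        simp only []
        rw [max_max_right hy.1]
        have hy' : Real.exp (-(a * y)) = (Real.exp (a * y))⁻¹ := Real.exp_neg _
        rw [mul_add, Real.exp_add, show (-a * y) = -(a * y) by ring, hy']
        have hpos := (Real.exp_pos (a * y)).ne'
        field_simp
        ring)]
    refine integral_eq_sub_of_hasDerivAt (fun y _ => ?_) (Continuous.intervalIntegrable (by fun_prop) _ _)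
    have d1 := exp_mul_hasDerivAt (b := -a) (neg_ne_zero.2 ha.ne') y
    have d2 := exp_mul_hasDerivAt (b := a) ha.ne' y
    have := ((d1.sub ((hasDerivAt_id y).const_mul (2 * E))).add
      ((d2.const_mul (E ^ 2)))).const_mul (Real.exp (a * x))
    convert this using 1
    · rfl
    · ext z
      simp only [hΦ, id_eq]
      simp only [Pi.sub_apply, Pi.add_apply]
      ring
    · try simp only [id_eq]
      ring
  rw [hIicc, hInterval, hΦ, auxJ, if_pos hx]
  simp only []
  rw [← hc, ← hE]
  have e1 : Real.exp (-(a * c)) = (Real.exp (a * c))⁻¹ := Real.exp_neg _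
  have e2 : E = (Real.exp (a * T))⁻¹ := Real.exp_neg _
  have e3 : Real.exp (-a * T) = (Real.exp (a * T))⁻¹ := by
    rw [show (-a * T) = -(a * T) by ring]; exact Real.exp_neg _
  have e4 : Real.exp (-a * c) = (Real.exp (a * c))⁻¹ := by
    rw [show (-a * c) = -(a * c) by ring]; exact Real.exp_neg _
  rw [e1, e2, e3, e4]
  have p1 := (Real.exp_pos (a * c)).ne'
  have p2 := (Real.exp_pos (a * T)).ne'
  field_simp
  ring

/- ### outer integral -/

lemma outer_integral {a T : ℝ} (ha : 0 < a) (hT : 0 < T) :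
    ∫ x : ℝ, auxJ a T x = 2 * T / a + 2 * (Real.exp (-(a * T)) - 1) / a ^ 2 := by
  set E := Real.exp (-(a * T)) with hE
  have hE1 : E ≤ 1 := Real.exp_le_one_iff.2 (by nlinarith)
  have hE0 : 0 < E := Real.exp_pos _
  set w : ℝ → ℝ := fun x =>
    Real.exp (a * x) *
      (2 * (Real.exp (-(a * max x 0)) - E) / a - 2 * E * (T - max x 0)) with hw
  have hcont : Continuous w := by fun_prop
  have h1 : ∀ x, auxJ a T x = (Iic T).indicator w x := by
    intro x
    by_cases hx : x ≤ T <;> simp [auxJ, hx, indicator_apply, mem_Iic, hw, hE]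
  rw [show (∫ x : ℝ, auxJ a T x) = ∫ x : ℝ, (Iic T).indicator w x from by simp_rw [h1],
    MeasureTheory.integral_indicator measurableSet_Iic]
  -- integrability on Iic T
  have hIntT : IntegrableOn w (Iic T) := by
    refine Integrable.mono' (g := fun x => (2 / a + 2 * E * T) * Real.exp (a * x))
      ((integrableOn_exp_mul_Iic' ha T).const_mul _)
      hcont.aestronglyMeasurable.restrict
      (((ae_restrict_iff' measurableSet_Iic).2 (Eventually.of_forall fun x hx => ?_)))
    have hx : x ≤ T := hx
    have hm0 : (0:ℝ) ≤ max x 0 := le_max_right _ _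
    have hmT : max x 0 ≤ T := max_le hx hT.le
    have hd1 : Real.exp (-(a * max x 0)) ≤ 1 := Real.exp_le_one_iff.2 (by nlinarith)
    have hd0 : E ≤ Real.exp (-(a * max x 0)) := Real.exp_le_exp.2 (by nlinarith)
    rw [hw]
    simp only []
    rw [Real.norm_eq_abs, abs_mul, abs_of_nonneg (Real.exp_pos _).le, mul_comm]
    have habs : |2 * (Real.exp (-(a * max x 0)) - E) / a - 2 * E * (T - max x 0)|
        ≤ 2 / a + 2 * E * T := by
      rw [abs_le]
      constructor
      · have h2 : 0 ≤ 2 * (Real.exp (-(a * max x 0)) - E) / a :=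
          div_nonneg (by nlinarith) ha.le
        have h5 : 0 < 2 / a := by positivity
        nlinarith
      · have h3 : 0 ≤ 2 * E * (T - max x 0) := by nlinarith
        have h4 : 2 * (Real.exp (-(a * max x 0)) - E) / a ≤ 2 / a := by
          gcongr
          nlinarith
        nlinarith
    exact mul_le_mul_of_nonneg_right habs (Real.exp_pos _).le
  have hInt0 : IntegrableOn w (Iic 0) := hIntT.mono_set (Iic_subset_Iic.2 hT.le)
  have hsplit := intervalIntegral.integral_Iic_sub_Iic hInt0 hIntT
  have hIicT : (∫ x in Iic T, w x) = (∫ x in Iic 0, w x) + ∫ x in (0:ℝ)..T, w x := by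
    linarith
  rw [hIicT]
  -- the Iic 0 part
  have hIic0 : (∫ x in Iic 0, w x)
      = (2 * (1 - E) / a - 2 * E * T) * (Real.exp (a * 0) / a) := by
    rw [show (∫ x in Iic 0, w x)
        = ∫ x in Iic (0:ℝ), (2 * (1 - E) / a - 2 * E * T) * Real.exp (a * x)
        from setIntegral_congr_fun measurableSet_Iic (fun x hx => by
          rw [hw]
          simp only []
          rw [max_eq_right (hx : x ≤ 0), mul_zero, neg_zero, Real.exp_zero]
          ring)]
    rw [MeasureTheory.integral_const_mul, integral_exp_mul_Iic' ha]
  -- the interval part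
  set G : ℝ → ℝ := fun x =>
    2 * x / a - 2 * E * Real.exp (a * x) / a ^ 2 -
      2 * E * (((T - x) / a + 1 / a ^ 2) * Real.exp (a * x)) with hG
  have hInterval : (∫ x in (0:ℝ)..T, w x) = G T - G 0 := by
    rw [intervalIntegral.integral_congr (g := fun x =>
        2 / a - 2 * E * Real.exp (a * x) / a - 2 * E * ((T - x) * Real.exp (a * x)))
      (by
        rw [uIcc_of_le hT.le]
        intro x hx
        rw [hw]
        simp only []
        rw [max_eq_left hx.1]
        have hy' : Real.exp (-(a * x)) = (Real.exp (a * x))⁻¹ := Real.exp_neg _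
        rw [hy']
        have hpos := (Real.exp_pos (a * x)).ne'
        field_simp)]
    refine integral_eq_sub_of_hasDerivAt (fun x _ => ?_)
      (Continuous.intervalIntegrable (by fun_prop) _ _)
    have d2 : HasDerivAt (fun x => Real.exp (a * x)) (Real.exp (a * x) * a) x := by
      simpa using ((hasDerivAt_id x).const_mul a).exp
    have hp : HasDerivAt (fun x => (T - x) / a + 1 / a ^ 2) ((-1) / a) x :=
      (((hasDerivAt_id x).const_sub T).div_const a).add_const (1 / a ^ 2)
    have hq := (hp.mul d2).const_mul (2 * E)
    have c1 : HasDerivAt (fun x : ℝ => 2 * x / a) (2 / a) x := by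
      simpa using ((hasDerivAt_id x).const_mul 2).div_const a
    have c2 := (d2.const_mul (2 * E)).div_const (a ^ 2)
    have total := (c1.sub c2).sub hq
    convert total using 1
    · rfl
    field_simp
    ring
  rw [hIic0, hInterval, hG]
  simp only [mul_zero, Real.exp_zero]
  have e2 : E = (Real.exp (a * T))⁻¹ := Real.exp_neg _
  rw [hE] at e2 ⊢
  rw [e2]
  have p2 := (Real.exp_pos (a * T)).ne'
  field_simp
  ring

/- ### integrability on the product space -/

lemma integrable_auxF {a T : ℝ} (ha : 0 < a) (hT : 0 < T) :
    Integrable (fun p : ℝ × ℝ => auxF a T p.1 p.2) := by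
  set E := Real.exp (-(a * T)) with hE
  set g : ℝ → ℝ := fun x => (if x ≤ T then (1 : ℝ) else 0) * Real.exp (a * min x 0) with hg
  have hg0 : ∀ z, 0 ≤ g z := by
    intro z
    rw [hg]
    by_cases hz : z ≤ T <;> simp [hz, (Real.exp_pos _).le]
  have hgint : Integrable g := by
    have hrw : g = (Iic T).indicator (fun x => Real.exp (a * min x 0)) := by
      funext x
      by_cases hx : x ≤ T <;> simp [hg, hx, indicator_apply, mem_Iic]
    rw [hrw, integrable_indicator_iff measurableSet_Iic]
    refine Integrable.mono' (integrableOn_exp_mul_Iic' ha T)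
      ((by fun_prop : Continuous fun x => Real.exp (a * min x 0)).aestronglyMeasurable.restrict)
      (Eventually.of_forall fun x => ?_)
    rw [Real.norm_of_nonneg (Real.exp_pos _).le]
    exact Real.exp_le_exp.2 (mul_le_mul_of_nonneg_left (min_le_left x 0) ha.le)
  have hprod : Integrable (fun p : ℝ × ℝ => g p.1 * g p.2) := by
    rw [MeasureTheory.Measure.volume_eq_prod ℝ ℝ]
    exact hgint.mul_prod hgint
  refine hprod.mono' ?_ (Eventually.of_forall fun p => ?_)
  · have m1 : Measurable fun p : ℝ × ℝ => (if p.1 ≤ T then (1 : ℝ) else 0) :=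
      Measurable.ite (measurableSet_le measurable_fst measurable_const)
        measurable_const measurable_const
    have m2 : Measurable fun p : ℝ × ℝ => (if p.2 ≤ T then (1 : ℝ) else 0) :=
      Measurable.ite (measurableSet_le measurable_snd measurable_const)
        measurable_const measurable_const
    have m3 : Continuous fun p : ℝ × ℝ =>
        Real.exp (a * (p.1 + p.2)) *
          (Real.exp (-(a * max (max p.1 p.2) 0)) - Real.exp (-(a * T))) ^ 2 := by fun_prop
    exact (((m1.mul m2).mul m3.measurable)).aestronglyMeasurable
  · obtain ⟨x, y⟩ := p
    by_cases hx : x ≤ T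
    case neg => simp [auxF, hx]; positivity
    by_cases hy : y ≤ T
    case neg => simp [auxF, hy]; positivity
    set m := max (max x y) 0 with hm
    have hm0 : (0:ℝ) ≤ m := le_max_right _ _
    have hmT : m ≤ T := max_le (max_le hx hy) hT.le
    have hm1 : max x 0 ≤ m := max_le_max (le_max_left x y) le_rfl
    have hm2 : max y 0 ≤ m := max_le_max (le_max_right x y) le_rfl
    have hd0 : 0 ≤ Real.exp (-(a * m)) - E := by
      rw [hE]
      have := Real.exp_le_exp.2 (show -(a*T) ≤ -(a*m) by nlinarith)
      linarith
    have hd1 : Real.exp (-(a * m)) - E ≤ Real.exp (-(a * m)) := by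
      have := (Real.exp_pos (-(a * T))).le
      rw [hE]; linarith
    have hFnn : 0 ≤ auxF a T x y := by
      rw [auxF, if_pos hx, if_pos hy]
      positivity
    rw [Real.norm_of_nonneg hFnn, auxF, if_pos hx, if_pos hy, hg]
    simp only [if_pos hx, if_pos hy, one_mul]
    calc Real.exp (a * (x + y)) * (Real.exp (-(a * max (max x y) 0)) - Real.exp (-(a * T))) ^ 2
        ≤ Real.exp (a * (x + y)) * (Real.exp (-(a * m)) * Real.exp (-(a * m))) := by
          rw [← hm, ← hE]
          have h6 := (Real.exp_pos (a * (x + y))).le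
          have h7 : (Real.exp (-(a * m)) - E) ^ 2
              ≤ Real.exp (-(a * m)) * Real.exp (-(a * m)) := by nlinarith
          exact mul_le_mul_of_nonneg_left h7 h6
      _ = Real.exp (a * (x + y) + (-(a * m) + -(a * m))) := by
          rw [← Real.exp_add, ← Real.exp_add]
      _ ≤ Real.exp (a * min x 0 + a * min y 0) := by
          apply Real.exp_le_exp.2
          have e1 : min x 0 + max x 0 = x + 0 := min_add_max x 0
          have e2 : min y 0 + max y 0 = y + 0 := min_add_max y 0
          nlinarith
      _ = Real.exp (a * min x 0) * Real.exp (a * min y 0) := Real.exp_add _ _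

/- ### assembly -/

lemma main_integral {a T : ℝ} (ha : 0 < a) (hT : 0 < T) :
    (∫ p : ℝ × ℝ, auxF a T p.1 p.2)
      = 2 * T / a + 2 * (Real.exp (-(a * T)) - 1) / a ^ 2 := by
  rw [MeasureTheory.Measure.volume_eq_prod ℝ ℝ, MeasureTheory.integral_prod _
    (by rw [← MeasureTheory.Measure.volume_eq_prod ℝ ℝ]; exact integrable_auxF ha hT)]
  simp_rw [inner_integral ha hT]
  exact outer_integral ha hT

/-- `∫_{ℝ²} f₂(x₁,x₂)² dx₁ dx₂ = T/ρ + (e^{-2ρT} - 1)/(2ρ²)`. -/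
theorem stmt_9 (ρ T : ℝ) (hρ : 0 < ρ) (hT : 0 < T) :
    (∫ p : ℝ × ℝ, (ouKernel ρ T p.1 p.2) ^ 2) =
      T / ρ + (Real.exp (-2 * ρ * T) - 1) / (2 * ρ ^ 2) := by
  have ha : 0 < 2 * ρ := by linarith
  simp_rw [ouKernel_sq]
  rw [main_integral ha hT, show (-2 * ρ * T) = -(2 * ρ * T) by ring]
  field_simp
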